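/- Let ℋ be a complex Hilbert space, H ⊆ ℋ a closed real-linear subspace, and A : ℋ → ℋ a bounded selfadjoint complex-linear operator. Write K = iA. Then the following are equivalent: (i) for every s ∈ ℝ, the unitary exp(isA) maps H onto H; (ii) K maps H into H; (iii) for every x ∈ ℋ, if (K + 1)x ∈ H then x ∈ H, and if (K − 1)x ∈ H then x ∈ H (equivalently, the resolvents (K ± 1)⁻¹, which exist since K is skew-adjoint, map H into H). -/

import Mathlib

open scoped ComplexConjugate
open NormedSpace Filter Topology
open scoped Nat

set_option maxHeartbeats 1000000
set_option synthInstance.maxHeartbeats 200000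

noncomputable section

namespace RealSubspaceInvariantAux

variable {ℋ : Type*} [NormedAddCommGroup ℋ] [InnerProductSpace ℂ ℋ] [CompleteSpace ℋ]

local notation "⟪" x ", " y "⟫" => @inner ℂ _ _ x y

lemma mem_of_hasSum (H : Submodule ℝ ℋ) (hH : IsClosed (H : Set ℋ))
    {f : ℕ → ℋ} (hf : ∀ n, f n ∈ H) {a : ℋ} (ha : HasSum f a) : a ∈ H :=
  hH.mem_of_tendsto ha (Filter.Eventually.of_forall fun s => Submodule.sum_mem H fun n _ => hf n)

lemma skew_norm {B : ℋ →L[ℂ] ℋ} (hskew : ∀ u : ℋ, (⟪B u, u⟫).re = 0)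
    {c : ℝ} (hc : 0 ≤ c) (u : ℋ) : c * ‖u‖ ≤ ‖B u + c • u‖ := by
  have h2 : ‖B u + c • u‖ ^ 2 = ‖B u‖ ^ 2 + 2 * (RCLike.re ⟪B u, c • u⟫) + ‖c • u‖ ^ 2 :=
    norm_add_sq (𝕜 := ℂ) _ _
  have h3 : (⟪B u, c • u⟫).re = 0 := by
    rw [show (c • u) = ((c : ℂ) • u) from (Complex.coe_smul c u).symm, inner_smul_right]
    simp [Complex.mul_re, hskew u]
  rw [RCLike.re_to_complex, h3] at h2
  have h4 : ‖c • u‖ = c * ‖u‖ := by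
    rw [norm_smul, Real.norm_of_nonneg hc]
  nlinarith [norm_nonneg (B u + c • u), norm_nonneg (B u), mul_nonneg hc (norm_nonneg u)]

lemma geom_pres (H : Submodule ℝ ℋ) (hH : IsClosed (H : Set ℋ))
    {t : ℋ →L[ℂ] ℋ} (ht : ‖t‖ < 1) (htH : ∀ x ∈ H, t x ∈ H) :
    ∀ x ∈ H, (∑' n : ℕ, t ^ n) x ∈ H := by
  intro x hx
  have hsum : HasSum (fun n : ℕ => t ^ n) (∑' n : ℕ, t ^ n) :=
    (summable_geometric_of_norm_lt_one ht).hasSum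
  have happ : HasSum (fun n : ℕ => (t ^ n) x) ((∑' n : ℕ, t ^ n) x) := by
    have h2 := (ContinuousLinearMap.apply ℂ ℋ x).hasSum hsum
    simpa only [ContinuousLinearMap.apply_apply] using h2
  refine mem_of_hasSum H hH ?_ happ
  intro n
  induction n with
  | zero => simpa using hx
  | succ n ih =>
      rw [pow_succ']
      exact htH _ ih

/-- `B + c` has a two-sided inverse mapping `H` into itself. -/
def Pres (H : Submodule ℝ ℋ) (B : ℋ →L[ℂ] ℋ) (c : ℝ) : Prop :=
  ∃ R : ℋ →L[ℂ] ℋ, (B + c • 1) * R = 1 ∧ R * (B + c • 1) = 1 ∧ ∀ x ∈ H, R x ∈ H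

lemma res_norm {B R : ℋ →L[ℂ] ℋ} (hskew : ∀ u : ℋ, (⟪B u, u⟫).re = 0)
    {μ : ℝ} (hμ : 0 < μ) (h1 : (B + μ • 1) * R = 1) (y : ℋ) :
    ‖R y‖ ≤ ‖y‖ / μ := by
  have happ : B (R y) + μ • (R y) = y := by
    have := congrArg (fun T : ℋ →L[ℂ] ℋ => T y) h1
    simpa using this
  have hb := skew_norm hskew hμ.le (R y)
  rw [happ] at hb
  rw [le_div_iff₀ hμ]
  linarith

lemma step (H : Submodule ℝ ℋ) (hH : IsClosed (H : Set ℋ)) {B : ℋ →L[ℂ] ℋ}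
    (hskew : ∀ u : ℋ, (⟪B u, u⟫).re = 0) {μ ν : ℝ} (hμ : 0 < μ) (hd : |μ - ν| < μ)
    (h : Pres H B μ) : Pres H B ν := by
  obtain ⟨R, h1, h2, hRH⟩ := h
  have hRnorm : ‖R‖ ≤ 1 / μ := by
    refine ContinuousLinearMap.opNorm_le_bound R (by positivity) fun y => ?_
    rw [one_div, inv_mul_eq_div]
    exact res_norm hskew hμ h1 y
  set t : ℋ →L[ℂ] ℋ := (μ - ν) • R with htdef
  have ht : ‖t‖ < 1 := by
    have h5 : ‖t‖ = |μ - ν| * ‖R‖ := by rw [htdef, norm_smul, Real.norm_eq_abs]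
    have h6 : |μ - ν| * ‖R‖ ≤ |μ - ν| * (1 / μ) :=
      mul_le_mul_of_nonneg_left hRnorm (abs_nonneg _)
    have h7 : |μ - ν| * (1 / μ) < 1 := by
      rw [mul_one_div, div_lt_one hμ]; exact hd
    linarith
  set u : (ℋ →L[ℂ] ℋ)ˣ := Units.oneSub t ht with hudef
  have hval : (u : ℋ →L[ℂ] ℋ) = 1 - t := rfl
  have hinv : ((u⁻¹ : (ℋ →L[ℂ] ℋ)ˣ) : ℋ →L[ℂ] ℋ) = ∑' n : ℕ, t ^ n := rfl
  have hT : B + ν • (1 : ℋ →L[ℂ] ℋ) = (B + μ • 1) * (1 - t) := by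
    rw [mul_sub, mul_one, htdef, mul_smul_comm, h1]
    module
  refine ⟨(u⁻¹ : (ℋ →L[ℂ] ℋ)ˣ) * R, ?_, ?_, ?_⟩
  · have hcancel : (1 - t) * ((u⁻¹ : (ℋ →L[ℂ] ℋ)ˣ) : ℋ →L[ℂ] ℋ) = 1 := u.mul_inv
    calc (B + ν • 1) * ((u⁻¹ : (ℋ →L[ℂ] ℋ)ˣ) * R)
        = (B + μ • 1) * (((1 - t) * (u⁻¹ : (ℋ →L[ℂ] ℋ)ˣ)) * R) := by
          rw [hT, mul_assoc, mul_assoc]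
      _ = 1 := by rw [hcancel, one_mul, h1]
  · have hcancel : ((u⁻¹ : (ℋ →L[ℂ] ℋ)ˣ) : ℋ →L[ℂ] ℋ) * (1 - t) = 1 := u.inv_mul
    calc ((u⁻¹ : (ℋ →L[ℂ] ℋ)ˣ) * R) * (B + ν • 1)
        = (u⁻¹ : (ℋ →L[ℂ] ℋ)ˣ) * ((R * (B + μ • 1)) * (1 - t)) := by
          rw [hT, mul_assoc, mul_assoc]
      _ = 1 := by rw [h2, one_mul, hcancel]
  · intro x hx
    rw [ContinuousLinearMap.mul_apply, hinv]
    refine geom_pres H hH ht ?_ (R x) (hRH x hx)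
    intro y hy
    rw [htdef, ContinuousLinearMap.smul_apply]
    exact H.smul_mem _ (hRH y hy)

lemma base (H : Submodule ℝ ℋ) (hH : IsClosed (H : Set ℋ)) {B : ℋ →L[ℂ] ℋ}
    (hBH : ∀ x ∈ H, B x ∈ H) : Pres H B (‖B‖ + 2) := by
  set lam : ℝ := ‖B‖ + 2 with hlamdef
  have hlam : 0 < lam := by positivity
  set t : ℋ →L[ℂ] ℋ := -(lam⁻¹ • B) with htdef
  have ht : ‖t‖ < 1 := by
    rw [htdef, norm_neg, norm_smul, Real.norm_eq_abs, abs_of_pos (by positivity)]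
    rw [inv_mul_lt_iff₀ hlam, mul_one]
    linarith [norm_nonneg B]
  set u : (ℋ →L[ℂ] ℋ)ˣ := Units.oneSub t ht with hudef
  have hinv : ((u⁻¹ : (ℋ →L[ℂ] ℋ)ˣ) : ℋ →L[ℂ] ℋ) = ∑' n : ℕ, t ^ n := rfl
  have hT : B + lam • (1 : ℋ →L[ℂ] ℋ) = lam • (1 - t) := by
    rw [htdef, sub_neg_eq_add, smul_add, smul_smul, mul_inv_cancel₀ hlam.ne', one_smul]
    module
  refine ⟨lam⁻¹ • ((u⁻¹ : (ℋ →L[ℂ] ℋ)ˣ) : ℋ →L[ℂ] ℋ), ?_, ?_, ?_⟩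
  · rw [hT, smul_mul_smul_comm, mul_inv_cancel₀ hlam.ne']
    have : (1 - t) * ((u⁻¹ : (ℋ →L[ℂ] ℋ)ˣ) : ℋ →L[ℂ] ℋ) = 1 := u.mul_inv
    rw [this, one_smul]
  · rw [hT, smul_mul_smul_comm, inv_mul_cancel₀ hlam.ne']
    have : ((u⁻¹ : (ℋ →L[ℂ] ℋ)ˣ) : ℋ →L[ℂ] ℋ) * (1 - t) = 1 := u.inv_mul
    rw [this, one_smul]
  · intro x hx
    rw [ContinuousLinearMap.smul_apply, hinv]
    refine H.smul_mem _ (geom_pres H hH ht ?_ x hx)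
    intro y hy
    rw [htdef]
    simp only [ContinuousLinearMap.neg_apply, ContinuousLinearMap.smul_apply]
    exact H.neg_mem (H.smul_mem _ (hBH y hy))

lemma abs_base_sub_one {B : ℋ →L[ℂ] ℋ} : |(‖B‖ + 2) - 1| < ‖B‖ + 2 := by
  rw [abs_of_nonneg (by linarith [norm_nonneg B])]
  linarith [norm_nonneg B]

lemma exists_inverse_one {B : ℋ →L[ℂ] ℋ} (hskew : ∀ u : ℋ, (⟪B u, u⟫).re = 0) :
    ∃ R : ℋ →L[ℂ] ℋ, (B + (1 : ℝ) • 1) * R = 1 ∧ R * (B + (1 : ℝ) • 1) = 1 := by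
  have h0 : Pres ⊤ B (‖B‖ + 2) := base ⊤ (by simp) (fun x _ => trivial)
  have h1 : Pres ⊤ B 1 := step ⊤ (by simp) hskew (by positivity) abs_base_sub_one h0
  obtain ⟨R, hR1, hR2, _⟩ := h1
  exact ⟨R, hR1, hR2⟩

lemma P1_of_plus (H : Submodule ℝ ℋ) {B : ℋ →L[ℂ] ℋ}
    (hskew : ∀ u : ℋ, (⟪B u, u⟫).re = 0)
    (hplus : ∀ x : ℋ, B x + x ∈ H → x ∈ H) : Pres H B 1 := by
  obtain ⟨R, h1, h2⟩ := exists_inverse_one hskew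
  refine ⟨R, h1, h2, fun x hx => ?_⟩
  apply hplus
  have h3 : B (R x) + R x = x := by
    have := congrArg (fun T : ℋ →L[ℂ] ℋ => T x) h1
    simpa using this
  rw [h3]
  exact hx

lemma P1_of_pres (H : Submodule ℝ ℋ) (hH : IsClosed (H : Set ℋ)) {B : ℋ →L[ℂ] ℋ}
    (hskew : ∀ u : ℋ, (⟪B u, u⟫).re = 0)
    (hBH : ∀ x ∈ H, B x ∈ H) : Pres H B 1 :=
  step H hH hskew (by positivity) abs_base_sub_one (base H hH hBH)

lemma mem_of_succ (H : Submodule ℝ ℋ) {B : ℋ →L[ℂ] ℋ} (hP : Pres H B 1) :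
    ∀ x : ℋ, B x + x ∈ H → x ∈ H := by
  obtain ⟨R, h1, h2, hRH⟩ := hP
  intro x hx
  have hxid : R (B x + x) = x := by
    have := congrArg (fun T : ℋ →L[ℂ] ℋ => T x) h2
    simpa using this
  rw [← hxid]
  exact hRH _ hx

lemma yosida (H : Submodule ℝ ℋ) (hH : IsClosed (H : Set ℋ)) {B : ℋ →L[ℂ] ℋ}
    (hskew : ∀ u : ℋ, (⟪B u, u⟫).re = 0) (hP1 : Pres H B 1) :
    ∀ x ∈ H, B x ∈ H := by
  have hchain : ∀ n : ℕ, Pres H B ((3 / 2 : ℝ) ^ n) := by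
    intro n
    induction n with
    | zero => simpa using hP1
    | succ n ih =>
        refine step H hH hskew (by positivity) ?_ ih
        have h0 : (0 : ℝ) < (3 / 2 : ℝ) ^ n := by positivity
        have habs : |(3 / 2 : ℝ) ^ n - (3 / 2 : ℝ) ^ (n + 1)| = (3 / 2 : ℝ) ^ n / 2 := by
          rw [pow_succ, abs_of_nonpos (by nlinarith)]
          ring
        rw [habs]
        linarith
  choose R hR1 hR2 hRH using hchain
  intro x hx
  have hlampos : ∀ n : ℕ, (0 : ℝ) < (3 / 2 : ℝ) ^ n := fun n => by positivity
  have happ : ∀ n : ℕ, B (R n x) + ((3 / 2 : ℝ) ^ n) • (R n x) = x := by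
    intro n
    have := congrArg (fun T : ℋ →L[ℂ] ℋ => T x) (hR1 n)
    simpa using this
  have hnorm : ∀ n : ℕ, ‖R n x‖ ≤ ‖x‖ / (3 / 2 : ℝ) ^ n := fun n =>
    res_norm hskew (hlampos n) (hR1 n) x
  have hmem : ∀ n : ℕ,
      ((3 / 2 : ℝ) ^ n) • x - (((3 / 2 : ℝ) ^ n) ^ 2) • (R n x) ∈ H := fun n =>
    H.sub_mem (H.smul_mem _ hx) (H.smul_mem _ (hRH n x hx))
  have hid : ∀ n : ℕ,
      ((3 / 2 : ℝ) ^ n) • x - (((3 / 2 : ℝ) ^ n) ^ 2) • (R n x) = B x - B (B (R n x)) := by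
    intro n
    have h := happ n
    have hBx : B x = B (B (R n x)) + ((3 / 2 : ℝ) ^ n) • B (R n x) := by
      conv_lhs => rw [← h]
      rw [map_add, B.map_smul_of_tower]
    have hx2 : ((3 / 2 : ℝ) ^ n) • x
        = ((3 / 2 : ℝ) ^ n) • B (R n x) + (((3 / 2 : ℝ) ^ n) ^ 2) • R n x := by
      conv_lhs => rw [← h]
      rw [smul_add, smul_smul, ← pow_two]
    rw [hBx, hx2]
    module
  have hlim : Tendsto (fun n : ℕ => ((3 / 2 : ℝ) ^ n) • x - (((3 / 2 : ℝ) ^ n) ^ 2) • (R n x))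
      atTop (𝓝 (B x)) := by
    rw [tendsto_iff_dist_tendsto_zero]
    have key : ∀ n : ℕ,
        dist (((3 / 2 : ℝ) ^ n) • x - (((3 / 2 : ℝ) ^ n) ^ 2) • (R n x)) (B x)
          ≤ (‖B‖ ^ 2 * ‖x‖) * (2 / 3 : ℝ) ^ n := by
      intro n
      rw [dist_eq_norm, hid n]
      have : B x - B (B (R n x)) - B x = -(B (B (R n x))) := by abel
      rw [this, norm_neg]
      have hdiv : ‖x‖ / (3 / 2 : ℝ) ^ n = ‖x‖ * (2 / 3 : ℝ) ^ n := by
        rw [div_eq_mul_inv, ← inv_pow]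
        norm_num
      calc ‖B (B (R n x))‖ ≤ ‖B‖ * ‖B (R n x)‖ := B.le_opNorm _
        _ ≤ ‖B‖ * (‖B‖ * ‖R n x‖) := by
            gcongr
            exact B.le_opNorm _
        _ ≤ ‖B‖ * (‖B‖ * (‖x‖ / (3 / 2 : ℝ) ^ n)) := by
            gcongr
            exact hnorm n
        _ = (‖B‖ ^ 2 * ‖x‖) * (2 / 3 : ℝ) ^ n := by rw [hdiv]; ring
    have h23 : Tendsto (fun n : ℕ => (‖B‖ ^ 2 * ‖x‖) * (2 / 3 : ℝ) ^ n) atTop (𝓝 0) := by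
      have := (tendsto_pow_atTop_nhds_zero_of_lt_one (by norm_num : (0:ℝ) ≤ 2 / 3)
        (by norm_num : (2:ℝ) / 3 < 1)).const_mul (‖B‖ ^ 2 * ‖x‖)
      simpa using this
    exact squeeze_zero (fun n => dist_nonneg) key h23
  exact hH.mem_of_tendsto hlim (Filter.Eventually.of_forall hmem)

lemma exp_pres (H : Submodule ℝ ℋ) (hH : IsClosed (H : Set ℋ)) {K : ℋ →L[ℂ] ℋ}
    (hKH : ∀ x ∈ H, K x ∈ H) (s : ℝ) :
    ∀ x ∈ H, exp (s • K) x ∈ H := by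
  intro x hx
  have hKn : ∀ n : ℕ, (K ^ n) x ∈ H := by
    intro n
    induction n with
    | zero => simpa using hx
    | succ n ih => rw [pow_succ']; exact hKH _ ih
  have hsum : HasSum (fun n : ℕ => ((n ! : ℂ))⁻¹ • (s • K) ^ n) (exp (s • K)) := by
    have h1 := (expSeries_summable' (𝕂 := ℂ) (s • K)).hasSum
    rw [exp_eq_tsum ℂ]
    exact h1
  have happ : HasSum (fun n : ℕ => (((n ! : ℂ))⁻¹ • (s • K) ^ n) x) (exp (s • K) x) := by
    have h2 := (ContinuousLinearMap.apply ℂ ℋ x).hasSum hsum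
    simpa only [ContinuousLinearMap.apply_apply] using h2
  refine mem_of_hasSum H hH ?_ happ
  intro n
  have hterm : (((n ! : ℂ))⁻¹ • (s • K) ^ n) x = ((n ! : ℝ))⁻¹ • (s ^ n • (K ^ n) x) := by
    rw [smul_pow]
    have hcoe : ((n ! : ℂ))⁻¹ = (((n ! : ℝ))⁻¹ : ℝ) := by push_cast; ring
    rw [ContinuousLinearMap.smul_apply, ContinuousLinearMap.smul_apply, hcoe,
      Complex.coe_smul]
  rw [hterm]
  exact H.smul_mem _ (H.smul_mem _ (hKn n))

end RealSubspaceInvariantAux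

open RealSubspaceInvariantAux

/-- Characterisation of closed real-linear subspaces of a complex Hilbert space invariant
under the unitary one-parameter group `exp(isA)` generated by a bounded selfadjoint
operator `A`, with `K = iA`. -/
theorem realSubspace_invariant_tfae
    {ℋ : Type*} [NormedAddCommGroup ℋ] [InnerProductSpace ℂ ℋ] [CompleteSpace ℋ]
    (H : Submodule ℝ ℋ) (hH : IsClosed (H : Set ℋ))
    (A : ℋ →L[ℂ] ℋ) (hA : IsSelfAdjoint A) :
    List.TFAE [
      ∀ s : ℝ, (⇑(NormedSpace.exp (((s : ℂ) * Complex.I) • A)) : ℋ → ℋ) '' (H : Set ℋ) = H,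
      ∀ x ∈ H, (Complex.I • A) x ∈ H,
      ∀ x : ℋ, (((Complex.I • A) x + x ∈ H) → x ∈ H) ∧
        (((Complex.I • A) x - x ∈ H) → x ∈ H) ] := by
  have hreal : ∀ u : ℋ, (@inner ℂ _ _ (A u) u).im = 0 := by
    intro u
    have h : @inner ℂ _ _ (A u) u = @inner ℂ _ _ u (A u) := hA.isSymmetric u u
    have h2 : @inner ℂ _ _ u (A u) = (starRingEnd ℂ) (@inner ℂ _ _ (A u) u) :=
      (inner_conj_symm _ _).symm
    rw [h2] at h
    exact Complex.conj_eq_iff_im.mp h.symm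
  have hskewK : ∀ u : ℋ, (@inner ℂ _ _ ((Complex.I • A) u) u).re = 0 := by
    intro u
    rw [ContinuousLinearMap.smul_apply, inner_smul_left]
    simp [Complex.mul_re, Complex.conj_I, hreal u]
  have hskewK' : ∀ u : ℋ, (@inner ℂ _ _ ((-(Complex.I • A)) u) u).re = 0 := by
    intro u
    rw [ContinuousLinearMap.neg_apply, inner_neg_left]
    simp only [Complex.neg_re, neg_eq_zero]
    exact hskewK u
  have hEK : ∀ s : ℝ, ((s : ℂ) * Complex.I) • A = s • (Complex.I • A) := by
    intro s
    rw [← Complex.coe_smul s (Complex.I • A), smul_smul]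
  tfae_have 1 → 2 := by
    intro h1 x hx
    -- consider the derivative at 0 of s ↦ exp(sK) x
    set K : ℋ →L[ℂ] ℋ := Complex.I • A with hKdef
    have hfs : ∀ s : ℝ, NormedSpace.exp (s • K) x ∈ H := by
      intro s
      have himg : NormedSpace.exp (((s : ℂ) * Complex.I) • A) x ∈ (H : Set ℋ) := by
        rw [← h1 s]
        exact Set.mem_image_of_mem _ hx
      rw [hEK s] at himg
      exact himg
    have hexp_eq : (NormedSpace.exp : (ℋ →L[ℂ] ℋ) → (ℋ →L[ℂ] ℋ)) = NormedSpace.exp :=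
      rfl
    have hD0 : HasDerivAt (fun s : ℝ => NormedSpace.exp (s • K)) K 0 := by
      have h0 := hasDerivAt_exp_smul_const (𝕂 := ℝ) K 0
      simpa using h0
    have hD : HasDerivAt (fun s : ℝ => NormedSpace.exp (s • K) x) (K x) 0 := by
      have hev : HasFDerivAt (fun T : ℋ →L[ℂ] ℋ => T x)
          (((ContinuousLinearMap.apply ℂ ℋ x).restrictScalars ℝ)) (NormedSpace.exp ((0:ℝ) • K)) :=
        (((ContinuousLinearMap.apply ℂ ℋ x).restrictScalars ℝ)).hasFDerivAt
      exact hev.comp_hasDerivAt 0 hD0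
    rw [hasDerivAt_iff_tendsto_slope] at hD
    have hmem : ∀ s : ℝ, slope (fun s : ℝ => NormedSpace.exp (s • K) x) 0 s ∈ H := by
      intro s
      rw [slope_def_module]
      have h00 : NormedSpace.exp ((0:ℝ) • K) x = x := by simp
      refine H.smul_mem _ (H.sub_mem ?_ ?_)
      · rw [← hexp_eq]; exact hfs s
      · rw [h00]; exact hx
    have := hH.mem_of_tendsto hD (Filter.Eventually.of_forall fun s => hmem s)
    exact this
  tfae_have 2 → 1 := by
    intro h2 s
    have hKH : ∀ x ∈ H, (Complex.I • A) x ∈ H := h2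
    apply Set.Subset.antisymm
    · rintro y ⟨x, hx, rfl⟩
      rw [hEK s]
      exact exp_pres H hH hKH s x hx
    · intro y hy
      refine ⟨NormedSpace.exp ((-s) • (Complex.I • A)) y, exp_pres H hH hKH (-s) y hy, ?_⟩
      rw [hEK s]
      have hcomm : Commute ((s : ℝ) • (Complex.I • A)) ((-s : ℝ) • (Complex.I • A)) :=
        ((Commute.refl (Complex.I • A)).smul_left s).smul_right (-s)
      have hmul : NormedSpace.exp (s • (Complex.I • A)) *
          NormedSpace.exp ((-s) • (Complex.I • A)) = 1 := by
        rw [← NormedSpace.exp_add_of_commute_of_mem_ball (𝕂 := ℂ) hcomm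
          ((expSeries_radius_eq_top ℂ (ℋ →L[ℂ] ℋ)).symm ▸ edist_lt_top _ _)
          ((expSeries_radius_eq_top ℂ (ℋ →L[ℂ] ℋ)).symm ▸ edist_lt_top _ _)]
        have : (s : ℝ) • (Complex.I • A) + (-s : ℝ) • (Complex.I • A) = 0 := by module
        rw [this, NormedSpace.exp_zero]
      have := congrArg (fun T : ℋ →L[ℂ] ℋ => T y) hmul
      simpa using this
  tfae_have 2 → 3 := by
    intro h2 x
    constructor
    · intro hx
      exact mem_of_succ H (P1_of_pres H hH hskewK h2) x hx
    · intro hx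
      have hBH' : ∀ y ∈ H, (-(Complex.I • A)) y ∈ H := by
        intro y hy
        rw [ContinuousLinearMap.neg_apply]
        exact H.neg_mem (h2 y hy)
      refine mem_of_succ H (P1_of_pres H hH hskewK' hBH') x ?_
      rw [ContinuousLinearMap.neg_apply]
      have : -(Complex.I • A) x + x = -((Complex.I • A) x - x) := by abel
      rw [this]
      exact H.neg_mem hx
  tfae_have 3 → 2 := by
    intro h3 x hx
    exact yosida H hH hskewK (P1_of_plus H hskewK (fun y hy => (h3 y).1 hy)) x hx
  tfae_finish
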